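/- For any sequences of predictions a^t ∈ [0,1] and labels b^t ∈ [0,1] over t ∈ [T] and any bucketing parameter n ≥ 1, the Brier score is bounded by the bucketed Brier score plus 1/n: B^a ≤ B^a_n + 1/n, where B^a_n := K^a_n + R^a_n. -/

import Mathlib

open scoped BigOperators Classical

noncomputable section

/-- Membership in the `i`-th bucket of the `n`-bucketing of `[0,1]`:
`B^i_n = [i/n, (i+1)/n)` for `i < n−1`, and `B^{n-1}_n = [1−1/n, 1]`
(buckets indexed from `0`). -/
def inBucket (n : ℕ) (i : Fin n) (z : ℝ) : Prop :=
  ((i : ℝ) / n ≤ z ∧ z < ((i : ℝ) + 1) / n) ∨ ((i : ℕ) + 1 = n ∧ z = 1)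

/-- The average of `v` over a finite set `S` of rounds (zero if `S` is empty). -/
noncomputable def subseqAvg {T : ℕ} (S : Finset (Fin T)) (v : Fin T → ℝ) : ℝ :=
  (∑ t ∈ S, v t) / S.card

/-- Index of the bucket containing `z`. -/
def bucketIdx (n : ℕ) (z : ℝ) : ℕ := min ⌊(n : ℝ) * z⌋₊ (n - 1)

lemma bucketIdx_lt (n : ℕ) (hn : 1 ≤ n) (z : ℝ) : bucketIdx n z < n :=
  lt_of_le_of_lt (min_le_right _ _) (Nat.sub_lt hn Nat.one_pos)

lemma inBucket_iff (n : ℕ) (hn : 1 ≤ n) (i : Fin n) (z : ℝ)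
    (hz : z ∈ Set.Icc (0 : ℝ) 1) : inBucket n i z ↔ (i : ℕ) = bucketIdx n z := by
  have hn0 : (0:ℝ) < (n:ℝ) := by exact_mod_cast hn
  obtain ⟨hz0, hz1⟩ := hz
  rcases eq_or_lt_of_le hz1 with h1 | h1
  · -- z = 1
    have hbi : bucketIdx n z = n - 1 := by
      have hfl : ⌊(n:ℝ) * z⌋₊ = n := by rw [h1]; simp
      rw [bucketIdx, hfl]; omega
    constructor
    · rintro (⟨_, hlt⟩ | ⟨hin, _⟩)
      · exfalso
        have h2 : ((i:ℝ) + 1) / n ≤ 1 := by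
          rw [div_le_one hn0]
          have : (i : ℕ) + 1 ≤ n := i.2
          exact_mod_cast this
        rw [h1] at hlt
        linarith
      · rw [hbi]; omega
    · intro h
      rw [hbi] at h
      exact Or.inr ⟨by omega, h1⟩
  · -- z < 1
    have hflt : ⌊(n:ℝ) * z⌋₊ < n := by
      rw [Nat.floor_lt (by positivity)]
      calc (n:ℝ) * z < (n:ℝ) * 1 := mul_lt_mul_of_pos_left h1 hn0
        _ = n := by ring
    have hbi : bucketIdx n z = ⌊(n:ℝ) * z⌋₊ := by
      have : ⌊(n:ℝ) * z⌋₊ ≤ n - 1 := by omega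
      simp [bucketIdx, this]
    rw [hbi]
    constructor
    · rintro (⟨hle, hlt⟩ | ⟨_, hz1'⟩)
      · symm
        rw [Nat.floor_eq_iff (by positivity)]
        constructor
        · rw [div_le_iff₀ hn0] at hle; linarith [hle]
        · rw [lt_div_iff₀ hn0] at hlt; push_cast; linarith [hlt]
      · exfalso; rw [hz1'] at h1; exact lt_irrefl _ h1
    · intro h
      left
      have hfl := Nat.floor_le (show (0:ℝ) ≤ (n:ℝ)*z by positivity)
      have h2 := Nat.lt_floor_add_one ((n:ℝ) * z)
      rw [← h] at hfl h2
      constructor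
      · rw [div_le_iff₀ hn0]; linarith
      · rw [lt_div_iff₀ hn0]; linarith

/-- Bhatia–Davis style variance bound. -/
lemma var_le {T : ℕ} (S : Finset (Fin T)) (v : Fin T → ℝ) (m M : ℝ)
    (hS : S.Nonempty) (hv : ∀ t ∈ S, m ≤ v t ∧ v t ≤ M) :
    ∑ t ∈ S, (v t - subseqAvg S v) ^ 2
      ≤ (S.card : ℝ) * ((M - subseqAvg S v) * (subseqAvg S v - m)) := by
  set c : ℝ := (S.card : ℝ) with hc
  have hc0 : (0:ℝ) < c := by rw [hc]; exact_mod_cast hS.card_pos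
  set A : ℝ := subseqAvg S v with hA
  have hsum : ∑ t ∈ S, v t = c * A := by
    rw [hA, subseqAvg, ← hc]; field_simp
  have key : ∑ t ∈ S, ((v t - A) ^ 2 + (M - v t) * (v t - m))
      = c * ((M - A) * (A - m)) := by
    have h : ∀ t ∈ S, (v t - A) ^ 2 + (M - v t) * (v t - m)
        = (A ^ 2 - M * m) + (M + m - 2 * A) * v t := fun t _ => by ring
    rw [Finset.sum_congr rfl h, Finset.sum_add_distrib, Finset.sum_const,
      ← Finset.mul_sum, hsum]
    simp only [nsmul_eq_mul, ← hc]
    ring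
  have hnn : (0:ℝ) ≤ ∑ t ∈ S, (M - v t) * (v t - m) :=
    Finset.sum_nonneg fun t ht => by nlinarith [(hv t ht).1, (hv t ht).2]
  rw [Finset.sum_add_distrib] at key
  linarith

lemma avg_mem {T : ℕ} (S : Finset (Fin T)) (v : Fin T → ℝ) (m M : ℝ)
    (hS : S.Nonempty) (hv : ∀ t ∈ S, m ≤ v t ∧ v t ≤ M) :
    m ≤ subseqAvg S v ∧ subseqAvg S v ≤ M := by
  have hc0 : (0:ℝ) < (S.card : ℝ) := by exact_mod_cast hS.card_pos
  have h1 : (S.card : ℝ) * m ≤ ∑ t ∈ S, v t := by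
    calc (S.card : ℝ) * m = ∑ _t ∈ S, m := by rw [Finset.sum_const, nsmul_eq_mul]
      _ ≤ ∑ t ∈ S, v t := Finset.sum_le_sum (fun t ht => (hv t ht).1)
  have h2 : ∑ t ∈ S, v t ≤ (S.card : ℝ) * M := by
    calc ∑ t ∈ S, v t ≤ ∑ _t ∈ S, M := Finset.sum_le_sum (fun t ht => (hv t ht).2)
      _ = (S.card : ℝ) * M := by rw [Finset.sum_const, nsmul_eq_mul]
  constructor
  · rw [subseqAvg, le_div_iff₀ hc0]; linarith
  · rw [subseqAvg, div_le_iff₀ hc0]; linarith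

lemma neg_two_mul_le (x y q t : ℝ) (hx : 0 ≤ x) (hy : 0 ≤ y) (h : q ^ 2 ≤ x * y) :
    -(2 * (t * q)) ≤ t ^ 2 * x + y := by
  have hP0 : 0 ≤ t ^ 2 * x + y := by positivity
  have h1 : t ^ 2 * q ^ 2 ≤ t ^ 2 * (x * y) := mul_le_mul_of_nonneg_left h (sq_nonneg t)
  nlinarith [hP0, h1, sq_nonneg (t ^ 2 * x - y)]

lemma fin_aux (x y q c N : ℝ) (hN : 1 ≤ N) (hc : 0 ≤ c) (hx : 0 ≤ x) (hy : 0 ≤ y)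
    (hX2 : 4 * N ^ 2 * x ≤ c) (hY2 : 4 * y ≤ c)
    (habs : -(4 * N * q) ≤ 4 * N ^ 2 * x + y) :
    (x - 2 * q) * N ≤ c := by
  nlinarith [mul_nonneg (mul_nonneg hx (by linarith : (0:ℝ) ≤ N)) (by linarith : (0:ℝ) ≤ N - 1)]

/-- Key per-bucket inequality. -/
lemma bucket_key {T n : ℕ} (hn : 1 ≤ n) (S : Finset (Fin T)) (a b : Fin T → ℝ)
    (m : ℝ) (hm : ∀ t ∈ S, m ≤ a t ∧ a t ≤ m + 1 / n)
    (hb : ∀ t ∈ S, 0 ≤ b t ∧ b t ≤ 1) :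
    ∑ t ∈ S, (a t - b t) ^ 2 ≤
      (S.card : ℝ) * (subseqAvg S a - subseqAvg S b) ^ 2
        + (∑ t ∈ S, (b t - subseqAvg S b) ^ 2) + (S.card : ℝ) / n := by
  rcases S.eq_empty_or_nonempty with rfl | hS
  · simp
  set c : ℝ := (S.card : ℝ) with hc
  have hc0 : (0:ℝ) < c := by rw [hc]; exact_mod_cast hS.card_pos
  set N : ℝ := (n : ℝ) with hN
  have hn0 : (0:ℝ) < N := by rw [hN]; exact_mod_cast hn
  have hn1 : (1:ℝ) ≤ N := by rw [hN]; exact_mod_cast hn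
  set A : ℝ := subseqAvg S a with hA
  set B : ℝ := subseqAvg S b with hB
  have hsA : ∑ t ∈ S, a t = c * A := by rw [hA, subseqAvg, ← hc]; field_simp
  have hsB : ∑ t ∈ S, b t = c * B := by rw [hB, subseqAvg, ← hc]; field_simp
  set X : ℝ := ∑ t ∈ S, (a t - A) ^ 2 with hXd
  set Y : ℝ := ∑ t ∈ S, (b t - B) ^ 2 with hYd
  set C : ℝ := ∑ t ∈ S, (a t - A) * (b t - B) with hCd
  have hX0 : 0 ≤ X := Finset.sum_nonneg fun t _ => sq_nonneg _
  have hY0 : 0 ≤ Y := Finset.sum_nonneg fun t _ => sq_nonneg _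
  clear_value c N A B X Y C
  have hAmem := avg_mem S a m (m + 1/N) hS hm
  rw [← hA] at hAmem
  -- 4 N² X ≤ c
  have hX2 : 4 * N^2 * X ≤ c := by
    have h1 := var_le S a m (m + 1/N) hS hm
    rw [← hA, ← hXd, ← hc] at h1
    have h2 : (m + 1/N - A) * (A - m) ≤ 1 / (4 * N^2) := by
      have hsq : (m + 1/N - A) * (A - m) = 1/(4*N^2) - (1/(2*N) - (A - m))^2 := by
        field_simp
        ring
      rw [hsq]
      nlinarith [sq_nonneg (1/(2*N) - (A - m))]
    have h3 : X ≤ c * (1 / (4 * N^2)) :=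
      h1.trans (mul_le_mul_of_nonneg_left h2 hc0.le)
    have h4 : c * (1 / (4 * N^2)) * (4 * N^2) = c := by field_simp
    have h5 := mul_le_mul_of_nonneg_right h3 (show (0:ℝ) ≤ 4 * N^2 by positivity)
    linarith [h4, h5]
  -- 4 Y ≤ c
  have hBmem := avg_mem S b 0 1 hS hb
  rw [← hB] at hBmem
  have hY2 : 4 * Y ≤ c := by
    have h1 := var_le S b 0 1 hS hb
    rw [← hB, ← hYd, ← hc] at h1
    have h2 : (1 - B) * (B - 0) ≤ 1 / 4 := by nlinarith [hBmem.1, hBmem.2, sq_nonneg (2*B - 1)]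
    nlinarith [h1, mul_le_mul_of_nonneg_left h2 hc0.le]
  -- Cauchy–Schwarz
  have hCS : C ^ 2 ≤ X * Y := by
    have h := Finset.sum_mul_sq_le_sq_mul_sq S (fun t => a t - A) (fun t => b t - B)
    rw [← hCd] at h
    simpa [← hXd, ← hYd] using h
  -- identity: ∑ (a-b)² = c(A-B)² + Y + X - 2C
  have hident : ∑ t ∈ S, (a t - b t) ^ 2 = c * (A - B) ^ 2 + Y + X - 2 * C := by
    have hptw : ∀ t ∈ S, (a t - b t) ^ 2 =
        (((A - B)^2 + (b t - B)^2 + (a t - A)^2) - 2 * ((a t - A) * (b t - B)))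
        + ((2*(A-B)) * a t + ((2*(B-A)) * b t + (4*A*B - 2*A^2 - 2*B^2))) :=
      fun t _ => by ring
    rw [Finset.sum_congr rfl hptw, Finset.sum_add_distrib]
    have hfirst : ∑ t ∈ S, ((((A - B)^2 + (b t - B)^2 + (a t - A)^2)
          - 2 * ((a t - A) * (b t - B))))
        = c * (A-B)^2 + Y + X - 2 * C := by
      rw [Finset.sum_sub_distrib, Finset.sum_add_distrib, Finset.sum_add_distrib,
        Finset.sum_const, ← Finset.mul_sum, ← hXd, ← hYd, ← hCd]
      simp only [nsmul_eq_mul, ← hc]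
      try ring
    have hsecond : ∑ t ∈ S, ((2*(A-B)) * a t + ((2*(B-A)) * b t
          + (4*A*B - 2*A^2 - 2*B^2))) = 0 := by
      rw [Finset.sum_add_distrib, Finset.sum_add_distrib, Finset.sum_const,
        ← Finset.mul_sum, ← Finset.mul_sum, hsA, hsB]
      simp only [nsmul_eq_mul, ← hc]
      ring
    rw [hfirst, hsecond]
    ring
  -- -4NC ≤ 4N²X + Y
  have habs : -(4 * N * C) ≤ 4 * N ^ 2 * X + Y := by
    have h := neg_two_mul_le X Y C (2 * N) hX0 hY0 hCS
    nlinarith [h]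
  -- X - 2C ≤ c/N
  have hfin : X - 2 * C ≤ c / N := by
    rw [le_div_iff₀ hn0]
    exact fin_aux X Y C c N hn1 hc0.le hX0 hY0 hX2 hY2 habs
  linarith [hident, hfin]


/-- **Lemma C.2.** For predictions `a^t ∈ [0,1]` and labels `b^t ∈ [0,1]`
and any bucketing parameter `n ≥ 1`, the Brier score is bounded by the bucketed Brier
score plus `1/n`:  `B^a ≤ K^a_n + R^a_n + 1/n`. -/
theorem brier_le_bucketed_brier
    (T n : ℕ) (hT : 1 ≤ T) (hn : 1 ≤ n)
    (a b : Fin T → ℝ)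
    (ha : ∀ t, a t ∈ Set.Icc (0 : ℝ) 1) (hb : ∀ t, b t ∈ Set.Icc (0 : ℝ) 1) :
    -- Brier score B^a
    (1 / (T : ℝ)) * ∑ t, (a t - b t) ^ 2 ≤
      -- bucketed calibration score K^a_n
      ((1 / (T : ℝ)) * ∑ i : Fin n,
        (((Finset.univ.filter fun t => inBucket n i (a t)).card : ℝ) *
          (subseqAvg (Finset.univ.filter fun t => inBucket n i (a t)) a -
            subseqAvg (Finset.univ.filter fun t => inBucket n i (a t)) b) ^ 2)) +
      -- bucketed refinement score R^a_n
      ((1 / (T : ℝ)) * ∑ i : Fin n,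
        ∑ t ∈ Finset.univ.filter fun t => inBucket n i (a t),
          (b t - subseqAvg (Finset.univ.filter fun t => inBucket n i (a t)) b) ^ 2) +
      1 / n := by
  have hT0 : (0:ℝ) < T := by exact_mod_cast hT
  have hn0 : (0:ℝ) < n := by exact_mod_cast hn
  set g : Fin T → Fin n := fun t => ⟨bucketIdx n (a t), bucketIdx_lt n hn _⟩ with hg
  have hfilter : ∀ i : Fin n,
      (Finset.univ.filter fun t => inBucket n i (a t))
        = Finset.univ.filter (fun t => g t = i) := by
    intro i
    apply Finset.filter_congr
    intro t _
    rw [inBucket_iff n hn i (a t) (ha t), hg]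
    simp [Fin.ext_iff, eq_comm]
  -- abbreviations
  set S : Fin n → Finset (Fin T) := fun i => Finset.univ.filter fun t => inBucket n i (a t)
    with hS
  -- total card
  have hcard : ∑ i : Fin n, ((S i).card : ℝ) = T := by
    have h1 : ∑ i : Fin n, (S i).card = T := by
      simp only [hS, hfilter]
      rw [Finset.sum_card_fiberwise_eq_card_filter]
      simp
    exact_mod_cast h1
  -- partition of the sum
  have hpart : ∑ t, (a t - b t) ^ 2 = ∑ i : Fin n, ∑ t ∈ S i, (a t - b t) ^ 2 := by
    simp only [hS, hfilter]
    exact (Finset.sum_fiberwise _ _ _).symm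
  -- per-bucket bound
  have hbound : ∀ i : Fin n, ∑ t ∈ S i, (a t - b t) ^ 2 ≤
      ((S i).card : ℝ) * (subseqAvg (S i) a - subseqAvg (S i) b) ^ 2
        + (∑ t ∈ S i, (b t - subseqAvg (S i) b) ^ 2) + ((S i).card : ℝ) / n := by
    intro i
    apply bucket_key hn (S i) a b ((i : ℝ) / n)
    · intro t ht
      rw [hS] at ht
      simp only [Finset.mem_filter] at ht
      rcases ht.2 with ⟨h1, h2⟩ | ⟨h1, h2⟩
      · exact ⟨h1, by rw [← add_div]; exact le_of_lt h2⟩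
      · constructor
        · rw [h2, div_le_one hn0]
          have : (i : ℕ) ≤ n := le_of_lt i.2
          exact_mod_cast this
        · rw [h2, ← add_div]
          have : ((i : ℕ) : ℝ) + 1 = (n : ℝ) := by exact_mod_cast h1
          rw [this, div_self hn0.ne']
    · exact fun t _ => ⟨(hb t).1, (hb t).2⟩
  -- assemble
  have hmain : ∑ t, (a t - b t) ^ 2 ≤
      (∑ i : Fin n, (((S i).card : ℝ) *
          (subseqAvg (S i) a - subseqAvg (S i) b) ^ 2))
        + (∑ i : Fin n, ∑ t ∈ S i, (b t - subseqAvg (S i) b) ^ 2)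
        + (T : ℝ) / n := by
    rw [hpart]
    have h1 : ∑ i : Fin n, ∑ t ∈ S i, (a t - b t) ^ 2 ≤
        ∑ i : Fin n, (((S i).card : ℝ) * (subseqAvg (S i) a - subseqAvg (S i) b) ^ 2
          + (∑ t ∈ S i, (b t - subseqAvg (S i) b) ^ 2) + ((S i).card : ℝ) / n) :=
      Finset.sum_le_sum fun i _ => hbound i
    have h2 : ∑ i : Fin n, (((S i).card : ℝ) * (subseqAvg (S i) a - subseqAvg (S i) b) ^ 2
          + (∑ t ∈ S i, (b t - subseqAvg (S i) b) ^ 2) + ((S i).card : ℝ) / n)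
        = (∑ i : Fin n, (((S i).card : ℝ) *
            (subseqAvg (S i) a - subseqAvg (S i) b) ^ 2))
          + (∑ i : Fin n, ∑ t ∈ S i, (b t - subseqAvg (S i) b) ^ 2)
          + (T : ℝ) / n := by
      rw [Finset.sum_add_distrib, Finset.sum_add_distrib, ← Finset.sum_div, hcard]
    linarith [h1, h2.symm ▸ h1]
  have hrw : ∀ i : Fin n, (Finset.univ.filter fun t => inBucket n i (a t)) = S i :=
    fun i => rfl
  simp only [hrw]
  have hfy : (1 / (T:ℝ)) * ((∑ i : Fin n, (((S i).card : ℝ) *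
          (subseqAvg (S i) a - subseqAvg (S i) b) ^ 2))
        + (∑ i : Fin n, ∑ t ∈ S i, (b t - subseqAvg (S i) b) ^ 2)
        + (T : ℝ) / n)
      = ((1 / (T : ℝ)) * ∑ i : Fin n, (((S i).card : ℝ) *
          (subseqAvg (S i) a - subseqAvg (S i) b) ^ 2))
        + ((1 / (T : ℝ)) * ∑ i : Fin n, ∑ t ∈ S i, (b t - subseqAvg (S i) b) ^ 2)
        + 1 / n := by
    rw [mul_add, mul_add, show (1 / (T:ℝ)) * ((T:ℝ) / n) = 1 / n by field_simp]
    try ring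
  rw [← hfy]
  exact mul_le_mul_of_nonneg_left hmain (by positivity)

end
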